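/- arXiv:1409.1160 — 8 statements merged into one kernel-verified Lean document; each statement's English description precedes it below -/
import Mathlib

section
/- Let n, h, k be integers with 0 ≤ k ≤ h < n. Then ∑_{j=k}^{h} (-1)^{j-k} (n choose j) (j choose k) = (-1)^{h-k} (n choose k) (n-k-1 choose h-k), as an identity of integers. -/
lemma aux_alt (N : ℕ) : ∀ m : ℕ, m < N →
    ∑ i ∈ Finset.range (m + 1), (-1 : ℤ) ^ i * (N.choose i) =
      (-1) ^ m * ((N - 1).choose m) := by
  intro m hm
  induction m with
  | zero => simp
  | succ m ih =>
    rw [Finset.sum_range_succ, ih (lt_trans (Nat.lt_succ_self m) hm)]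
    obtain ⟨N', rfl⟩ : ∃ N', N = N' + 1 := ⟨N - 1, by omega⟩
    have hp : (N' + 1).choose (m + 1) = N'.choose m + N'.choose (m + 1) :=
      Nat.succ_sub_one N' ▸ Nat.choose_succ_succ N' m
    simp only [Nat.add_sub_cancel, hp]
    push_cast
    ring

theorem stmt_1 (n h k : ℕ) (hkh : k ≤ h) (hhn : h < n) :
    ∑ j ∈ Finset.Icc k h, (-1 : ℤ) ^ (j - k) * (n.choose j) * (j.choose k) =
      (-1 : ℤ) ^ (h - k) * (n.choose k) * ((n - k - 1).choose (h - k)) := by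
  have key : ∀ j ∈ Finset.Icc k h,
      (-1 : ℤ) ^ (j - k) * (n.choose j) * (j.choose k) =
        (n.choose k : ℤ) * ((-1) ^ (j - k) * ((n - k).choose (j - k))) := by
    intro j hj
    rw [Finset.mem_Icc] at hj
    have := Nat.choose_mul (n := n) hj.1
    have : ((n.choose j : ℤ)) * (j.choose k) = (n.choose k : ℤ) * ((n - k).choose (j - k)) := by
      exact_mod_cast congrArg (Nat.cast : ℕ → ℤ) this
    rw [mul_assoc, this]; ring
  rw [Finset.sum_congr rfl key, ← Finset.mul_sum]
  have hIcc : Finset.Icc k h = Finset.Ico k (h + 1) := by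
    rw [Finset.Ico_add_one_right_eq_Icc]
  rw [hIcc, Finset.sum_Ico_eq_sum_range]
  have h1 : h + 1 - k = (h - k) + 1 := by omega
  have h2 : ∀ i, k + i - k = i := fun i => by omega
  simp only [h1, h2]
  rw [aux_alt (n - k) (h - k) (by omega)]
  have h3 : n - k - 1 = n - k - 1 := rfl
  ring
end

section
/- Let n, h be integers with 0 ≤ h < n. Then ∑_{k=0}^{h} (-1)^{h-k} (n choose k) (n-k-1 choose h-k) = 1, as an identity of integers. -/
theorem stmt_2 (n h : ℕ) (hhn : h < n) :
    ∑ k ∈ Finset.range (h + 1), (-1 : ℤ) ^ (h - k) * (n.choose k) * ((n - k - 1).choose (h - k)) = 1 := by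
  induction h with
  | zero => simp
  | succ h ih =>
    have hn : h < n := Nat.lt_of_succ_lt hhn
    have ih1 := ih hn
    have key : ∀ k ∈ Finset.range (h + 1 + 1),
        (-1 : ℤ) ^ (h + 1 - k) * (n.choose k) * ((n - k - 1).choose (h + 1 - k)) =
        (-1 : ℤ) ^ (h + 1 - k) * (n.choose k) * ((n - k).choose (h + 1 - k)) +
        (if k ≤ h then (-1 : ℤ) ^ (h - k) * (n.choose k) * ((n - k - 1).choose (h - k)) else 0) := by
      intro k hk
      rw [Finset.mem_range] at hk
      by_cases hkh : k ≤ h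
      · have hk1 : k < n := lt_of_le_of_lt hkh hn
        have e1 : h + 1 - k = (h - k) + 1 := by omega
        have e2 : n - k = (n - k - 1) + 1 := by omega
        rw [if_pos hkh, e1, e2, Nat.choose_succ_succ]
        push_cast
        have : (-1 : ℤ) ^ (h - k + 1) = -(-1 : ℤ) ^ (h - k) := by ring
        rw [this]; ring
      · have : k = h + 1 := by omega
        subst this
        simp
    rw [Finset.sum_congr rfl key, Finset.sum_add_distrib]
    have h2 : ∑ k ∈ Finset.range (h + 1 + 1),
        (if k ≤ h then (-1 : ℤ) ^ (h - k) * (n.choose k) * ((n - k - 1).choose (h - k)) else 0) = 1 := by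
      rw [Finset.sum_range_succ, if_neg (by omega), add_zero]
      refine Eq.trans (Finset.sum_congr rfl ?_) ih1
      intro k hk
      rw [Finset.mem_range] at hk
      rw [if_pos (by omega)]
    have h1 : ∑ k ∈ Finset.range (h + 1 + 1),
        (-1 : ℤ) ^ (h + 1 - k) * (n.choose k) * ((n - k).choose (h + 1 - k)) = 0 := by
      have trin : ∀ k ∈ Finset.range (h + 1 + 1),
          (-1 : ℤ) ^ (h + 1 - k) * (n.choose k) * ((n - k).choose (h + 1 - k)) =
          (-1 : ℤ) ^ (h + 1) * (n.choose (h + 1)) * ((-1 : ℤ) ^ k * ((h + 1).choose k)) := by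
        intro k hk
        rw [Finset.mem_range] at hk
        have hk1 : k ≤ h + 1 := by omega
        have hc : (n.choose (h+1) : ℤ) * ((h+1).choose k) =
            (n.choose k : ℤ) * ((n - k).choose (h + 1 - k)) := by
          exact_mod_cast congrArg (Nat.cast : ℕ → ℤ) (Nat.choose_mul (n := n) hk1)
        have hsign : (-1 : ℤ) ^ (h + 1 - k) * (-1 : ℤ) ^ k = (-1 : ℤ) ^ (h + 1) :=
          pow_sub_mul_pow (-1) hk1
        have h2k : (-1 : ℤ) ^ k * (-1 : ℤ) ^ k = 1 := by
          rw [← pow_add, ← two_mul, pow_mul]; norm_num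
        have hsign2 : (-1 : ℤ) ^ (h + 1 - k) = (-1 : ℤ) ^ (h + 1) * (-1 : ℤ) ^ k := by
          calc (-1 : ℤ) ^ (h + 1 - k) = (-1 : ℤ) ^ (h + 1 - k) * ((-1 : ℤ) ^ k * (-1 : ℤ) ^ k) := by
                rw [h2k, mul_one]
            _ = ((-1 : ℤ) ^ (h + 1 - k) * (-1 : ℤ) ^ k) * (-1 : ℤ) ^ k := by ring
            _ = (-1 : ℤ) ^ (h + 1) * (-1 : ℤ) ^ k := by rw [hsign]
        rw [mul_assoc, ← hc, hsign2]; ring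
      rw [Finset.sum_congr rfl trin, ← Finset.mul_sum,
        Int.alternating_sum_range_choose_of_ne (by omega), mul_zero]
    rw [h1, h2, zero_add]
end

section
/- Let G be an additive commutative group, h ≥ 0 an integer, and a : ℕ → G a sequence. Then a is an arithmetic progression of order h if and only if for every n ≥ 0, a_n = ∑_{k=0}^{h} (n choose k) • (D^k a)_0, where • denotes natural number scalar multiplication in G. -/
/-- The difference operator on sequences in an additive commutative group. -/
def diffOp {G : Type*} [AddCommGroup G] (a : ℕ → G) : ℕ → G :=
  fun n => a (n + 1) - a n

/-- `a` is an arithmetic progression of order `h`. -/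
def IsAPOfOrder {G : Type*} [AddCommGroup G] (a : ℕ → G) (h : ℕ) : Prop :=
  ∀ n : ℕ, ∑ k ∈ Finset.range (h + 2), ((-1 : ℤ) ^ (h + 1 - k) * ((h + 1).choose k)) • a (n + k) = 0

open Finset

lemma diffOp_iterate {G : Type*} [AddCommGroup G] (a : ℕ → G) (m n : ℕ) :
    diffOp^[m] a n = ∑ k ∈ range (m+1), (((-1:ℤ)^(m+k)) * ((m.choose k) : ℤ)) • a (n+k) := by
  induction m generalizing n with
  | zero => simp
  | succ m ih =>
    rw [Function.iterate_succ_apply']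
    show diffOp^[m] a (n+1) - diffOp^[m] a n = _
    rw [ih (n+1), ih n]
    have h1 : ∑ k ∈ range (m+1), (((-1:ℤ)^(m+k)) * ((m.choose k) : ℤ)) • a (n+1+k)
        = ∑ k ∈ range (m+1), (((-1:ℤ)^(m+k)) * ((m.choose k) : ℤ)) • a (n+(k+1)) := by
      apply Finset.sum_congr rfl
      intro k _
      rw [show n+1+k = n+(k+1) from by omega]
    rw [h1,
      Finset.sum_range_succ' (fun k => (((-1:ℤ)^(m+k)) * ((m.choose k) : ℤ)) • a (n+k)) m,
      Finset.sum_range_succ'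
        (fun k => (((-1:ℤ)^(m+1+k)) * (((m+1).choose k) : ℤ)) • a (n+k)) (m+1)]
    have hext : ∑ j ∈ range m, (((-1:ℤ)^(m+(j+1))) * ((m.choose (j+1)) : ℤ)) • a (n+(j+1))
        = ∑ j ∈ range (m+1), (((-1:ℤ)^(m+(j+1))) * ((m.choose (j+1)) : ℤ)) • a (n+(j+1)) := by
      rw [Finset.sum_range_succ]
      simp [Nat.choose_succ_self]
    rw [hext, sub_add_eq_sub_sub, ← Finset.sum_sub_distrib, sub_eq_add_neg]
    congr 1
    · apply Finset.sum_congr rfl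
      intro j _
      rw [← sub_smul]
      congr 1
      rw [Nat.choose_succ_succ]
      push_cast
      ring
    · rw [← neg_smul]
      congr 1
      simp [pow_succ]

lemma newton {G : Type*} [AddCommGroup G] (a : ℕ → G) (n : ℕ) :
    a n = ∑ k ∈ range (n+1), (n.choose k) • (diffOp^[k] a) 0 := by
  induction n generalizing a with
  | zero => simp
  | succ n ih =>
    have h1 : a (n+1) = diffOp a n + a n := by simp [diffOp]
    rw [h1, ih (diffOp a), ih a, Finset.sum_range_succ'
      (fun k => ((n+1).choose k) • (diffOp^[k] a) 0) (n+1)]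
    have h2 : ∑ k ∈ range (n+1), (n.choose k) • (diffOp^[k] (diffOp a)) 0
        = ∑ k ∈ range (n+1), (n.choose k) • (diffOp^[k+1] a) 0 := by
      apply Finset.sum_congr rfl
      intro k _
      rw [Function.iterate_succ_apply]
    rw [h2, Finset.sum_range_succ' (fun k => (n.choose k) • (diffOp^[k] a) 0) n]
    have h3 : ∑ k ∈ range n, (n.choose (k+1)) • (diffOp^[k+1] a) 0
        = ∑ k ∈ range (n+1), (n.choose (k+1)) • (diffOp^[k+1] a) 0 := by
      rw [Finset.sum_range_succ]
      simp [Nat.choose_succ_self]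
    rw [h3, ← add_assoc, ← Finset.sum_add_distrib]
    congr 1
    · apply Finset.sum_congr rfl
      intro k _
      rw [← add_smul, Nat.choose_succ_succ]
    · simp

lemma diffOp_closed {G : Type*} [AddCommGroup G] (m : ℕ) (c : ℕ → G) :
    diffOp (fun n => ∑ k ∈ range (m+1), (n.choose k) • c k)
      = fun n => ∑ k ∈ range m, (n.choose k) • c (k+1) := by
  funext n
  show (∑ k ∈ range (m+1), ((n+1).choose k) • c k) - ∑ k ∈ range (m+1), (n.choose k) • c k = _
  rw [Finset.sum_range_succ' (fun k => ((n+1).choose k) • c k) m,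
    Finset.sum_range_succ' (fun k => (n.choose k) • c k) m]
  simp only [Nat.choose_zero_right, one_smul]
  rw [add_sub_add_right_eq_sub, ← Finset.sum_sub_distrib]
  apply Finset.sum_congr rfl
  intro k _
  rw [Nat.choose_succ_succ, add_nsmul, add_sub_cancel_right]

lemma diffOp_iterate_closed {G : Type*} [AddCommGroup G] (m : ℕ) (c : ℕ → G) (n : ℕ) :
    diffOp^[m] (fun n => ∑ k ∈ range m, (n.choose k) • c k) n = 0 := by
  induction m generalizing c n with
  | zero => simp
  | succ m ih =>
    rw [Function.iterate_succ_apply, diffOp_closed]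
    exact ih (fun k => c (k+1)) n

lemma isAP_iff_diff {G : Type*} [AddCommGroup G] (a : ℕ → G) (h : ℕ) :
    IsAPOfOrder a h ↔ ∀ n, diffOp^[h+1] a n = 0 := by
  have key : ∀ n, diffOp^[h+1] a n
      = ∑ k ∈ range (h + 2), ((-1 : ℤ) ^ (h + 1 - k) * ((h + 1).choose k)) • a (n + k) := by
    intro n
    rw [diffOp_iterate]
    apply Finset.sum_congr rfl
    intro k hk
    have hk' : k ≤ h + 1 := by simpa using Nat.lt_succ_iff.mp (Finset.mem_range.mp hk)
    congr 2
    rw [show h+1+k = (h+1-k) + 2*k by omega, pow_add, pow_mul]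
    simp
  constructor
  · intro H n; rw [key n]; exact H n
  · intro H n; rw [← key n]; exact H n

theorem stmt_4 {G : Type*} [AddCommGroup G] (a : ℕ → G) (h : ℕ) :
    IsAPOfOrder a h ↔
      ∀ n : ℕ, a n = ∑ k ∈ Finset.range (h + 1), (n.choose k) • (diffOp^[k] a) 0 := by
  rw [isAP_iff_diff]
  constructor
  · intro H n
    rw [newton a n]
    have hzero : ∀ k, h + 1 ≤ k → (diffOp^[k] a) 0 = 0 := by
      intro k hk
      have e1 : diffOp^[k] a = diffOp^[k - (h+1)] (diffOp^[h+1] a) := by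
        rw [← Function.iterate_add_apply]
        congr 1
        omega
      rw [e1, funext H]
      have e2 : diffOp (fun _ : ℕ => (0:G)) = fun _ => 0 := by
        funext n; simp [diffOp]
      rw [Function.iterate_fixed e2]
    rcases le_or_gt n h with hn | hn
    · apply Finset.sum_subset
      · intro x hx
        simp only [Finset.mem_range] at *
        omega
      · intro x _ hx
        simp only [Finset.mem_range, not_lt] at hx
        rw [Nat.choose_eq_zero_of_lt (by omega)]
        simp
    · refine (Finset.sum_subset ?_ ?_).symm
      · intro x hx
        simp only [Finset.mem_range] at *
        omega
      · intro x _ hx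
        simp only [Finset.mem_range, not_lt] at hx
        rw [hzero x (by omega)]
        simp
  · intro H n
    have ha : a = fun n => ∑ k ∈ range (h+1), (n.choose k) • (diffOp^[k] a) 0 := funext H
    conv_lhs => rw [ha]
    exact diffOp_iterate_closed (h+1) _ n
end

section
/- Let G be an additive commutative group, h ≥ 0 an integer, and a : ℕ → G a sequence. Then a is an arithmetic progression of order h if and only if for every integer n > h, a_n = ∑_{k=0}^{h} (-1)^{h-k} (n choose k) (n-k-1 choose h-k) • a_k, where • denotes integer scalar multiplication in G. -/
open Finset

private lemma neg_one_pow_sub' (M k : ℕ) (hk : k ≤ M) :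
    ((-1 : ℤ)) ^ (M - k) = (-1) ^ M * (-1) ^ k := by
  have h3 : ((-1:ℤ))^k * ((-1:ℤ))^k = 1 := by
    rw [← pow_add, ← two_mul, pow_mul]; norm_num
  have h2 : ((-1:ℤ))^M = ((-1:ℤ))^(M-k) * ((-1:ℤ))^k := by
    rw [← pow_add, Nat.sub_add_cancel hk]
  rw [h2, mul_assoc, h3, mul_one]

private lemma alt_partial (M : ℕ) : ∀ m : ℕ,
    ∑ i ∈ range (m+1), (-1:ℤ)^i * ((M+1).choose i) = (-1)^m * (M.choose m) := by
  intro m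
  induction m with
  | zero => simp
  | succ m ih =>
    rw [Finset.sum_range_succ, ih, Nat.choose_succ_succ M m]
    push_cast
    ring

private lemma choose_mul' (n j k : ℕ) (hkj : k ≤ j) :
    n.choose j * j.choose k = n.choose k * (n-k).choose (j-k) := by
  rcases le_or_gt j n with hjn | hjn
  · exact Nat.choose_mul hkj
  · rw [Nat.choose_eq_zero_of_lt hjn]
    rcases le_or_gt k n with hkn | hkn
    · rw [Nat.choose_eq_zero_of_lt (show n - k < j - k by omega), mul_zero, zero_mul]
    · rw [Nat.choose_eq_zero_of_lt hkn, zero_mul, zero_mul]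

private lemma T_step (m n j : ℕ) :
    ∑ i ∈ range (m+2), (-1:ℤ)^i * ((m+1).choose i) * ((n+i).choose j)
    = (∑ i ∈ range (m+1), (-1:ℤ)^i * (m.choose i) * ((n+i).choose j))
      - ∑ i ∈ range (m+1), (-1:ℤ)^i * (m.choose i) * ((n+i+1).choose j) := by
  rw [Finset.sum_range_succ' (fun i => (-1:ℤ)^i * ((m+1).choose i) * ((n+i).choose j)) (m+1)]
  have e1 : ∑ i ∈ range (m+1), ((-1:ℤ)^(i+1) * ((m.choose (i+1)):ℤ) * (((n+i+1).choose j):ℤ))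
      = (∑ i ∈ range (m+1), (-1:ℤ)^i * (m.choose i) * ((n+i).choose j)) - ((n.choose j : ℤ)) := by
    have h2 := Finset.sum_range_succ' (fun i => (-1:ℤ)^i * (m.choose i) * ((n+i).choose j)) (m+1)
    rw [Finset.sum_range_succ (fun i => (-1:ℤ)^i * (m.choose i) * ((n+i).choose j)) (m+1)] at h2
    simp only [Nat.choose_succ_self, Nat.cast_zero, mul_zero, zero_mul, add_zero,
      pow_zero, Nat.choose_zero_right, Nat.cast_one, one_mul, mul_one, Nat.add_zero] at h2
    simp only [← add_assoc] at h2
    linarith [h2]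
  have e2 : ∀ i ∈ range (m+1),
      (-1:ℤ)^(i+1) * ((m+1).choose (i+1)) * ((n+(i+1)).choose j)
      = -((-1:ℤ)^i * (m.choose i) * ((n+i+1).choose j))
        + (-1:ℤ)^(i+1) * ((m.choose (i+1)):ℤ) * (((n+i+1).choose j):ℤ) := by
    intro i _
    rw [Nat.choose_succ_succ m i]
    simp only [← add_assoc]
    push_cast
    ring
  rw [Finset.sum_congr rfl e2, Finset.sum_add_distrib, e1]
  simp only [Finset.sum_neg_distrib, pow_zero, Nat.choose_zero_right, Nat.cast_one, one_mul,
    mul_one, Nat.add_zero]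
  ring

private lemma T_zero : ∀ m : ℕ, ∀ n j : ℕ, j < m →
    ∑ i ∈ range (m+1), (-1:ℤ)^i * (m.choose i) * ((n+i).choose j) = 0 := by
  intro m
  induction m with
  | zero => intro n j hj; omega
  | succ m ih =>
    intro n j hj
    cases j with
    | zero =>
      simp only [Nat.choose_zero_right, Nat.cast_one, mul_one]
      exact Int.alternating_sum_range_choose_of_ne (by omega)
    | succ j =>
      rw [T_step m n (j+1)]
      have e : ∀ i ∈ range (m+1),
          (-1:ℤ)^i * (m.choose i) * ((n+i).choose (j+1))
            - (-1:ℤ)^i * (m.choose i) * ((n+i+1).choose (j+1))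
          = -((-1:ℤ)^i * (m.choose i) * ((n+i).choose j)) := by
        intro i _
        rw [Nat.choose_succ_succ (n+i) j]
        push_cast
        ring
      rw [← Finset.sum_sub_distrib, Finset.sum_congr rfl e, Finset.sum_neg_distrib,
        ih n j (by omega), neg_zero]

private def bseq {G : Type*} [AddCommGroup G] (a : ℕ → G) (h : ℕ) (j : ℕ) : G :=
  ∑ k ∈ range (h+1), ((-1:ℤ)^(j-k) * (j.choose k)) • a k

private def newt {G : Type*} [AddCommGroup G] (a : ℕ → G) (h : ℕ) (n : ℕ) : G :=
  ∑ j ∈ range (h+1), ((n.choose j : ℤ)) • bseq a h j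

private lemma newt_eq {G : Type*} [AddCommGroup G] (a : ℕ → G) (h n : ℕ) :
    newt a h n = ∑ k ∈ range (h+1),
      (∑ j ∈ range (h+1), (n.choose j : ℤ) * ((-1:ℤ)^(j-k) * (j.choose k))) • a k := by
  unfold newt bseq
  simp only [Finset.smul_sum, smul_smul]
  rw [Finset.sum_comm]
  simp only [← Finset.sum_smul]

private lemma S_lt (n h k : ℕ) (hk : k ≤ h) (hkn : k < n) :
    ∑ j ∈ range (h+1), (n.choose j : ℤ) * ((-1:ℤ)^(j-k) * (j.choose k))
    = (-1:ℤ)^(h-k) * (n.choose k) * ((n-k-1).choose (h-k)) := by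
  rw [← Finset.sum_subset (show Finset.Ico k (h+1) ⊆ range (h+1) by
      intro x hx; rw [Finset.mem_range]; exact (Finset.mem_Ico.mp hx).2)
    (by
      intro x hx hx'
      simp only [Finset.mem_Ico, Finset.mem_range, not_and, not_le, not_lt] at hx hx'
      rw [Nat.choose_eq_zero_of_lt (show x < k by omega)]
      simp)]
  rw [Finset.sum_Ico_eq_sum_range]
  rw [show h + 1 - k = (h-k)+1 from by omega]
  have e : ∀ i ∈ range ((h-k)+1),
      (n.choose (k+i) : ℤ) * ((-1:ℤ)^(k+i-k) * ((k+i).choose k))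
      = (n.choose k : ℤ) * ((-1:ℤ)^i * ((n-k).choose i)) := by
    intro i _
    rw [Nat.add_sub_cancel_left]
    have hc : ((n.choose (k+i) : ℤ)) * ((k+i).choose k)
        = (n.choose k : ℤ) * ((n-k).choose (k+i-k)) := by
      exact_mod_cast congrArg (Nat.cast (R := ℤ)) (choose_mul' n (k+i) k (Nat.le_add_right k i))
    rw [Nat.add_sub_cancel_left] at hc
    linear_combination ((-1:ℤ)^i) * hc
  rw [Finset.sum_congr rfl e, ← Finset.mul_sum]
  have hs : ∑ i ∈ range ((h-k)+1), (-1:ℤ)^i * ((n-k).choose i)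
      = (-1:ℤ)^(h-k) * ((n-k-1).choose (h-k)) := by
    obtain ⟨M, hM⟩ : ∃ M, n - k = M + 1 := ⟨n-k-1, by omega⟩
    rw [show n-k-1 = M from by omega, hM]
    exact alt_partial M (h-k)
  rw [hs]
  ring

private lemma S_self (n h : ℕ) (hn : n ≤ h) :
    ∑ j ∈ range (h+1), (n.choose j : ℤ) * ((-1:ℤ)^(j-n) * (j.choose n)) = 1 := by
  rw [Finset.sum_eq_single n]
  · simp
  · intro j _ hne
    rcases lt_or_gt_of_ne hne with hlt | hgt
    · rw [Nat.choose_eq_zero_of_lt hlt]; simp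
    · rw [Nat.choose_eq_zero_of_lt hgt]; simp
  · intro hn'; exact absurd (Finset.mem_range.mpr (by omega)) hn'

private lemma S_big (n h k : ℕ) (hk : n < k) :
    ∑ j ∈ range (h+1), (n.choose j : ℤ) * ((-1:ℤ)^(j-k) * (j.choose k)) = 0 := by
  apply Finset.sum_eq_zero
  intro j _
  rcases lt_or_ge j k with hj | hj
  · rw [Nat.choose_eq_zero_of_lt hj]; simp
  · rw [Nat.choose_eq_zero_of_lt (lt_of_lt_of_le hk hj)]; simp

private lemma newt_low {G : Type*} [AddCommGroup G] (a : ℕ → G) (h n : ℕ) (hn : n ≤ h) :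
    newt a h n = a n := by
  rw [newt_eq, Finset.sum_eq_single n]
  · rw [S_self n h hn, one_smul]
  · intro k hk hne
    rcases lt_or_gt_of_ne hne with hlt | hgt
    · rw [S_lt n h k (by simp only [Finset.mem_range] at hk; omega) hlt,
        Nat.choose_eq_zero_of_lt (show n-k-1 < h-k by omega)]
      simp
    · rw [S_big n h k hgt, zero_smul]
  · intro h'; exact absurd (Finset.mem_range.mpr (by omega)) h'

private lemma newt_high {G : Type*} [AddCommGroup G] (a : ℕ → G) (h n : ℕ) (hn : h < n) :
    newt a h n = ∑ k ∈ range (h+1),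
      ((-1:ℤ)^(h-k) * (n.choose k) * ((n-k-1).choose (h-k))) • a k := by
  rw [newt_eq]
  apply Finset.sum_congr rfl
  intro k hk
  rw [S_lt n h k (by simp only [Finset.mem_range] at hk; omega)
    (by simp only [Finset.mem_range] at hk; omega)]

private lemma newt_ap {G : Type*} [AddCommGroup G] (a : ℕ → G) (h : ℕ) :
    IsAPOfOrder (newt a h) h := by
  intro n
  simp only [newt, Finset.smul_sum, smul_smul]
  rw [Finset.sum_comm]
  simp only [← Finset.sum_smul]
  apply Finset.sum_eq_zero
  intro j hj
  have e : ∀ k ∈ range (h+2),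
      (-1:ℤ)^(h+1-k) * ((h+1).choose k) * ((n+k).choose j)
      = (-1:ℤ)^(h+1) * ((-1:ℤ)^k * (((h+1).choose k) : ℤ) * (((n+k).choose j) : ℤ)) := by
    intro k hk
    rw [neg_one_pow_sub' (h+1) k (by simp only [Finset.mem_range] at hk; omega)]
    ring
  rw [Finset.sum_congr rfl e, ← Finset.mul_sum,
    T_zero (h+1) n j (by simp only [Finset.mem_range] at hj; omega), mul_zero, zero_smul]

private lemma ap_unique_zero {G : Type*} [AddCommGroup G] (d : ℕ → G) (h : ℕ)
    (hap : IsAPOfOrder d h) (h0 : ∀ k, k ≤ h → d k = 0) : ∀ n, d n = 0 := by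
  intro n
  induction n using Nat.strong_induction_on with
  | _ n ih =>
    rcases le_or_gt n h with hn | hn
    · exact h0 n hn
    · have hm := hap (n - (h+1))
      rw [Finset.sum_range_succ] at hm
      have hz : ∑ k ∈ range (h+1), ((-1:ℤ)^(h+1-k) * ((h+1).choose k)) • d (n-(h+1)+k) = 0 :=
        Finset.sum_eq_zero fun k hk => by
          rw [ih (n-(h+1)+k) (by simp only [Finset.mem_range] at hk; omega), smul_zero]
      rw [hz, zero_add, show n - (h+1) + (h+1) = n from by omega] at hm
      simpa using hm

theorem stmt_5 {G : Type*} [AddCommGroup G] (a : ℕ → G) (h : ℕ) :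
    IsAPOfOrder a h ↔
      ∀ n : ℕ, h < n →
        a n = ∑ k ∈ Finset.range (h + 1),
          ((-1 : ℤ) ^ (h - k) * (n.choose k) * ((n - k - 1).choose (h - k))) • a k := by
  constructor
  · intro hap n hn
    have hd : IsAPOfOrder (fun m => a m - newt a h m) h := by
      intro m
      simp only [smul_sub, Finset.sum_sub_distrib]
      rw [hap m, newt_ap a h m, sub_zero]
    have hz := ap_unique_zero _ h hd (fun k hk => by
      simp only [newt_low a h k hk, sub_self])
    have ha : a n = newt a h n := by
      have := hz n
      simp only [sub_eq_zero] at this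
      exact this
    rw [ha, newt_high a h n hn]
  · intro hf
    have ha : a = newt a h := by
      funext n
      rcases le_or_gt n h with hn | hn
      · exact (newt_low a h n hn).symm
      · rw [hf n hn, newt_high a h n hn]
    rw [ha]
    exact newt_ap a h
end

section
/- Let (E,d) be a metric space, m ≥ 1 an integer, q > 0 a real number, and T : E → E an (m,q)-isometry. For x, y ∈ E define ρ_T(x,y) = (∑_{k=0}^{m-1} (-1)^{m-1-k} (m-1 choose k) d(T^k x, T^k y)^q)^{1/q}. Then: (i) for all x, y ∈ E the sequence n ↦ d(T^n x, T^n y)^q / n^{m-1} converges and ρ_T(x,y)^q = (m-1)! · lim_{n→∞} d(T^n x, T^n y)^q / n^{m-1}; (ii) ρ_T is a semi-distance on E, i.e. ρ_T(x,y) ≥ 0, ρ_T(x,x) = 0, ρ_T(x,y) = ρ_T(y,x), and ρ_T(x,y) ≤ ρ_T(x,z) + ρ_T(z,y) for all x, y, z ∈ E. -/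
open Finset Filter Function fwdDiff

lemma aux_choose_div_pow (k : ℕ) :
    Tendsto (fun n : ℕ => (n.choose k : ℝ) / (n : ℝ) ^ k) atTop
      (nhds (1 / (k.factorial : ℝ))) := by
  have h1 : Tendsto (fun n : ℕ => (1 / (k.factorial : ℝ)) * ∏ i ∈ range k, (1 - (i : ℝ) / n))
      atTop (nhds ((1 / (k.factorial : ℝ)) * ∏ i ∈ range k, (1 : ℝ))) := by
    apply Tendsto.const_mul
    apply tendsto_finset_prod
    intro i _
    simpa using tendsto_const_nhds.sub (tendsto_const_div_atTop_nhds_zero_nat (i:ℝ))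
  simp only [prod_const_one, mul_one] at h1
  apply h1.congr'
  filter_upwards [eventually_ge_atTop (max k 1)] with n hn
  have hk : k ≤ n := le_trans (le_max_left _ _) hn
  have hn1 : (1:ℕ) ≤ n := le_trans (le_max_right _ _) hn
  have hn0 : (0:ℝ) < (n:ℝ) := by exact_mod_cast hn1
  have hd : (n.choose k : ℝ) = (n.descFactorial k : ℝ) / (k.factorial : ℝ) := by
    rw [Nat.descFactorial_eq_factorial_mul_choose]
    push_cast
    field_simp
  rw [hd, Nat.descFactorial_eq_prod_range]
  push_cast
  have hcast : ∏ i ∈ range k, ((n - i : ℕ) : ℝ) = ∏ i ∈ range k, ((n : ℝ) - i) := by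
    apply prod_congr rfl
    intro i hi
    have hi' : i ≤ n := le_trans (le_of_lt (mem_range.mp hi)) hk
    push_cast [Nat.cast_sub hi']
    ring
  have h2 : ∏ i ∈ range k, (1 - (i:ℝ)/n) = (∏ i ∈ range k, ((n:ℝ) - i)) / (n:ℝ)^k := by
    calc ∏ i ∈ range k, (1 - (i:ℝ)/n) = ∏ i ∈ range k, (((n:ℝ) - i) / n) := by
          apply prod_congr rfl; intro i _; field_simp
      _ = (∏ i ∈ range k, ((n:ℝ) - i)) / ∏ _i ∈ range k, (n:ℝ) := prod_div_distrib _ _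
      _ = (∏ i ∈ range k, ((n:ℝ) - i)) / (n:ℝ)^k := by rw [prod_const, card_range]
  rw [h2, hcast]
  ring

lemma aux_choose_div_pow' (k j : ℕ) (h : k ≤ j) :
    Tendsto (fun n : ℕ => (n.choose k : ℝ) / (n : ℝ) ^ j) atTop
      (nhds (if k = j then 1 / (k.factorial : ℝ) else 0)) := by
  rcases eq_or_lt_of_le h with rfl | hlt
  · simpa using aux_choose_div_pow k
  · rw [if_neg hlt.ne]
    have hpow : Tendsto (fun n : ℕ => ((n : ℝ) ^ (j - k))⁻¹) atTop (nhds 0) :=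
      (Filter.Tendsto.inv_tendsto_atTop
        ((tendsto_pow_atTop (by omega : j - k ≠ 0)).comp tendsto_natCast_atTop_atTop))
    have h0 := (aux_choose_div_pow k).mul hpow
    rw [mul_zero] at h0
    apply h0.congr'
    filter_upwards [eventually_ge_atTop 1] with n hn
    have hn0 : ((n:ℝ)) ≠ 0 := by positivity
    rw [← div_eq_mul_inv, div_div, ← pow_add, Nat.add_sub_cancel' h]

/-- `T` is an `(m,q)`-isometry on the metric space `E`. -/
def IsMQIsometry {E : Type*} [MetricSpace E] (T : E → E) (m : ℕ) (q : ℝ) : Prop :=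
  ∀ x y : E,
    ∑ k ∈ Finset.range (m + 1),
      (-1 : ℝ) ^ (m - k) * (m.choose k) * dist (T^[k] x) (T^[k] y) ^ q = 0

theorem stmt_16 {E : Type*} [MetricSpace E] (T : E → E) (m : ℕ) (hm : 1 ≤ m)
    (q : ℝ) (hq : 0 < q) (hT : IsMQIsometry T m q)
    (ρ : E → E → ℝ)
    (hρ : ∀ x y : E, ρ x y =
      (∑ k ∈ Finset.range m,
        (-1 : ℝ) ^ (m - 1 - k) * ((m - 1).choose k) * dist (T^[k] x) (T^[k] y) ^ q) ^ (1 / q)) :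
    (∀ x y : E, ∃ L : ℝ,
        Filter.Tendsto (fun n : ℕ => dist (T^[n] x) (T^[n] y) ^ q / (n : ℝ) ^ (m - 1))
          Filter.atTop (nhds L) ∧
        ρ x y ^ q = (Nat.factorial (m - 1) : ℝ) * L) ∧
    (∀ x y : E, 0 ≤ ρ x y) ∧
    (∀ x : E, ρ x x = 0) ∧
    (∀ x y : E, ρ x y = ρ y x) ∧
    (∀ x y z : E, ρ x y ≤ ρ x z + ρ z y) := by
  classical
  obtain ⟨p, rfl⟩ : ∃ p, m = p + 1 := ⟨m - 1, (Nat.succ_pred_eq_of_pos hm).symm⟩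
  simp only [Nat.add_sub_cancel] at hρ ⊢
  set a : E → E → ℕ → ℝ := fun x y n => dist (T^[n] x) (T^[n] y) ^ q with ha
  have hfac : (0:ℝ) < (p.factorial : ℝ) := by exact_mod_cast p.factorial_pos
  -- the m-th forward difference vanishes
  have hΔm : ∀ x y : E, (fwdDiff 1)^[p + 1] (a x y) = 0 := by
    intro x y
    funext n
    rw [fwdDiff_iter_eq_sum_shift, Pi.zero_apply]
    rw [← hT (T^[n] x) (T^[n] y)]
    apply Finset.sum_congr rfl
    intro k _
    have h1 : T^[k] (T^[n] x) = T^[n + k • 1] x := by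
      rw [smul_eq_mul, mul_one, add_comm, Function.iterate_add_apply]
    have h2 : T^[k] (T^[n] y) = T^[n + k • 1] y := by
      rw [smul_eq_mul, mul_one, add_comm, Function.iterate_add_apply]
    rw [h1, h2, ha]
    push_cast [zsmul_eq_mul]
    ring
  -- higher differences vanish
  have hΔge : ∀ (x y : E) (j : ℕ), p + 1 ≤ j → (fwdDiff 1)^[j] (a x y) = 0 := by
    intro x y j hj
    have h1 : j = (j - (p+1)) + (p+1) := by omega
    rw [h1, Function.iterate_add, Function.comp_apply, hΔm]
    exact Function.iterate_fixed (by funext t; simp [fwdDiff]) _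
  -- S = the (m-1)-st difference at 0
  set S : E → E → ℝ := fun x y => (fwdDiff 1)^[p] (a x y) 0 with hS
  -- Newton formula, eventually
  have hNewton : ∀ (x y : E) (n : ℕ), p ≤ n →
      a x y n = ∑ k ∈ range (p + 1), (n.choose k : ℝ) * (fwdDiff 1)^[k] (a x y) 0 := by
    intro x y n hn
    have h0 := shift_eq_sum_fwdDiff_iter (1:ℕ) (a x y) n 0
    simp only [zero_add, smul_eq_mul, mul_one, nsmul_eq_mul] at h0
    rw [h0]
    apply (Finset.sum_subset (Finset.range_subset_range.mpr (by omega : p + 1 ≤ n + 1)) ?_).symm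
    intro k _ hk
    rw [hΔge x y k (by simpa using hk)]
    simp
  -- the limit
  have hL : ∀ x y : E, Tendsto (fun n : ℕ => a x y n / (n:ℝ) ^ p) atTop
      (nhds (S x y / (p.factorial : ℝ))) := by
    intro x y
    have hsum : Tendsto (fun n : ℕ => ∑ k ∈ range (p+1),
        ((n.choose k : ℝ) / (n:ℝ)^p) * (fwdDiff 1)^[k] (a x y) 0) atTop
        (nhds (∑ k ∈ range (p+1),
          (if k = p then 1/(k.factorial:ℝ) else 0) * (fwdDiff 1)^[k] (a x y) 0)) := by
      apply tendsto_finset_sum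
      intro k hk
      exact (aux_choose_div_pow' k p (by have := mem_range.mp hk; omega)).mul_const _
    have hval : ∑ k ∈ range (p+1),
        (if k = p then 1/(k.factorial:ℝ) else 0) * (fwdDiff 1)^[k] (a x y) 0
        = S x y / p.factorial := by
      rw [Finset.sum_eq_single p]
      · rw [if_pos rfl, one_div, inv_mul_eq_div]
      · intro k _ hk; rw [if_neg hk, zero_mul]
      · intro h; exact absurd (self_mem_range_succ p) h
    rw [hval] at hsum
    apply hsum.congr'
    filter_upwards [eventually_ge_atTop p] with n hn
    rw [hNewton x y n hn, Finset.sum_div]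
    apply Finset.sum_congr rfl
    intro k _
    ring
  -- nonnegativity of the limit and of S
  have hLnn : ∀ x y : E, 0 ≤ S x y / (p.factorial : ℝ) := by
    intro x y
    refine ge_of_tendsto' (hL x y) fun n => ?_
    have : 0 ≤ a x y n := Real.rpow_nonneg dist_nonneg q
    positivity
  have hSnn : ∀ x y : E, 0 ≤ S x y := by
    intro x y
    have h1 := mul_nonneg (hLnn x y) hfac.le
    rwa [div_mul_cancel₀ _ hfac.ne'] at h1
  -- ρ in terms of S
  have hρS : ∀ x y : E, ρ x y = S x y ^ (1/q) := by
    intro x y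
    rw [hρ]
    congr 1
    show _ = (fwdDiff 1)^[p] (a x y) 0
    rw [fwdDiff_iter_eq_sum_shift]
    apply Finset.sum_congr rfl
    intro k _
    rw [ha]
    simp only [zero_add, smul_eq_mul, mul_one]
    push_cast [zsmul_eq_mul]
    ring
  have hρq : ∀ x y : E, ρ x y ^ q = S x y := by
    intro x y
    rw [hρS, ← Real.rpow_mul (hSnn x y), one_div_mul_cancel hq.ne', Real.rpow_one]
  refine ⟨?_, ?_, ?_, ?_, ?_⟩
  · -- part (i)
    intro x y
    refine ⟨S x y / (p.factorial : ℝ), hL x y, ?_⟩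
    rw [hρq, mul_comm, div_mul_cancel₀ _ hfac.ne']
  · intro x y
    rw [hρS]
    exact Real.rpow_nonneg (hSnn x y) _
  · intro x
    rw [hρ]
    simp [Real.zero_rpow hq.ne', Real.zero_rpow (one_div_ne_zero hq.ne'),
      Real.zero_rpow (inv_ne_zero hq.ne')]
  · intro x y
    rw [hρ, hρ]
    simp [dist_comm]
  · -- triangle inequality
    have hρlim : ∀ x y : E, Tendsto
        (fun n : ℕ => ((p.factorial : ℝ)/(n:ℝ)^p)^(1/q) * dist (T^[n] x) (T^[n] y))
        atTop (nhds (ρ x y)) := by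
      intro x y
      have h1 : Tendsto (fun n : ℕ => ((p.factorial : ℝ) * (a x y n / (n:ℝ)^p)) ^ (1/q)) atTop
          (nhds (((p.factorial:ℝ) * (S x y / p.factorial)) ^ (1/q))) :=
        ((hL x y).const_mul _).rpow_const (Or.inr (by positivity))
      rw [mul_comm, div_mul_cancel₀ _ hfac.ne', ← hρS x y] at h1
      apply h1.congr'
      filter_upwards [eventually_ge_atTop 1] with n hn
      have hn0 : (0:ℝ) < (n:ℝ)^p := by positivity
      have h2 : (p.factorial:ℝ) * (a x y n / (n:ℝ)^p)
          = ((p.factorial:ℝ)/(n:ℝ)^p) * (dist (T^[n] x) (T^[n] y) ^ q) := by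
        rw [ha]; ring
      rw [h2, Real.mul_rpow (by positivity) (Real.rpow_nonneg dist_nonneg q),
        ← Real.rpow_mul dist_nonneg, mul_one_div_cancel hq.ne', Real.rpow_one]
    intro x y z
    refine le_of_tendsto_of_tendsto' (hρlim x y) ((hρlim x z).add (hρlim z y)) fun n => ?_
    have hg : (0:ℝ) ≤ ((p.factorial : ℝ)/(n:ℝ)^p)^(1/q) :=
      Real.rpow_nonneg (by positivity) _
    calc ((p.factorial : ℝ)/(n:ℝ)^p)^(1/q) * dist (T^[n] x) (T^[n] y)
        ≤ ((p.factorial : ℝ)/(n:ℝ)^p)^(1/q) * (dist (T^[n] x) (T^[n] z) + dist (T^[n] z) (T^[n] y)) :=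
          mul_le_mul_of_nonneg_left (dist_triangle _ _ _) hg
      _ = _ := by ring
end

section
/- Let (E,d) be a metric space, T : E → E a map, q > 0 a real number, m, ℓ ≥ 1 integers and c, d ≥ 1 integers. If T^c is a strict (m,q)-isometry and T^d is a strict (ℓ,q)-isometry, then T^e is an (h,q)-isometry, where e is the greatest common divisor of c and d and h is the minimum of m and ℓ. -/
open Polynomial Finset

namespace Stmt17Aux

noncomputable def Sh : Module.End ℚ (ℕ → ℝ) where
  toFun f := fun n => f (n + 1)
  map_add' f g := rfl
  map_smul' c f := rfl

lemma Sh_pow_apply (a : ℕ) (f : ℕ → ℝ) (n : ℕ) : (Sh ^ a) f n = f (n + a) := by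
  induction a generalizing f with
  | zero => simp
  | succ a ih =>
    rw [pow_succ, Module.End.mul_apply, ih]
    rfl

lemma expand (a mm : ℕ) (f : ℕ → ℝ) (j : ℕ) :
    ((Sh ^ a - 1) ^ mm) f j
      = ∑ k ∈ Finset.range (mm + 1), (-1 : ℝ) ^ (mm - k) * (mm.choose k) * f (j + k * a) := by
  have hcomm : Commute (Sh ^ a) (-1 : Module.End ℚ (ℕ → ℝ)) := (Commute.one_right (Sh ^ a)).neg_right
  have h := hcomm.add_pow mm
  rw [← sub_eq_add_neg] at h
  rw [h, LinearMap.sum_apply, Finset.sum_apply]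
  refine Finset.sum_congr rfl fun k hk => ?_
  have hcast : ((-1 : Module.End ℚ (ℕ → ℝ)) ^ (mm - k) * (mm.choose k : Module.End ℚ (ℕ → ℝ)))
      = ((((-1) ^ (mm - k) * mm.choose k : ℤ)) : Module.End ℚ (ℕ → ℝ)) := by
    push_cast
    ring
  rw [mul_assoc, Module.End.mul_apply, hcast, Module.End.intCast_apply, map_zsmul,
    Pi.smul_apply, ← pow_mul, Sh_pow_apply, zsmul_eq_mul]
  push_cast
  rw [Nat.mul_comm a k]

lemma dvd_pow_sub_one {e c : ℕ} (h : e ∣ c) : ((X : ℚ[X]) ^ e - 1) ∣ (X ^ c - 1) := by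
  obtain ⟨k, rfl⟩ := h
  simpa [← pow_mul] using sub_dvd_pow_sub_pow ((X : ℚ[X]) ^ e) 1 k

lemma bezout (c d : ℕ) :
    ∃ u v : ℚ[X], (X : ℚ[X]) ^ (Nat.gcd c d) - 1 = u * (X ^ c - 1) + v * (X ^ d - 1) := by
  induction c using Nat.strong_induction_on generalizing d with
  | _ c ih =>
    rcases Nat.eq_zero_or_pos c with rfl | hc
    · exact ⟨0, 1, by simp⟩
    · obtain ⟨u, v, h⟩ := ih (d % c) (Nat.mod_lt d hc) c
      obtain ⟨s, hs⟩ := dvd_pow_sub_one (⟨d / c, rfl⟩ : c ∣ c * (d / c))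
      have hid : (X : ℚ[X]) ^ d - 1 = X ^ (d % c) * ((X : ℚ[X]) ^ (c * (d / c)) - 1) + (X ^ (d % c) - 1) := by
        have hp : (X : ℚ[X]) ^ (d % c) * X ^ (c * (d / c)) = X ^ d := by
          rw [← pow_add, Nat.mod_add_div]
        linear_combination -hp
      rw [hs] at hid
      rw [Nat.gcd_rec c d]
      refine ⟨v - u * X ^ (d % c) * s, u, ?_⟩
      rw [h]
      linear_combination -u * hid

lemma squarefree_xc (c : ℕ) (hc : 1 ≤ c) : Squarefree ((X : ℚ[X]) ^ c - 1) := by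
  refine (Polynomial.X_pow_sub_one_separable_iff.mpr ?_).squarefree
  exact_mod_cast Nat.cast_ne_zero.mpr (by omega)

lemma poly_key_aux (m ℓ c d : ℕ) (hc : 1 ≤ c) (hml : m ≤ ℓ) :
    ∃ α β : ℚ[X],
      ((X : ℚ[X]) ^ (Nat.gcd c d) - 1) ^ m = α * (X ^ c - 1) ^ m + β * (X ^ d - 1) ^ ℓ := by
  classical
  set e := Nat.gcd c d with he
  have hepos : 1 ≤ e := Nat.gcd_pos_of_pos_left d hc
  obtain ⟨P₁, hP₁⟩ := dvd_pow_sub_one (Nat.gcd_dvd_left c d)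
  obtain ⟨Q₁, hQ₁⟩ := dvd_pow_sub_one (Nat.gcd_dvd_right c d)
  have hG0 : ((X : ℚ[X]) ^ e - 1) ≠ 0 := by
    have := Polynomial.X_pow_sub_C_ne_zero (by omega : 0 < e) (1 : ℚ)
    simpa using this
  obtain ⟨u, v, huv⟩ := bezout c d
  have hcop : IsCoprime P₁ Q₁ := by
    refine ⟨u, v, ?_⟩
    refine (mul_left_cancel₀ hG0 ?_).symm
    rw [mul_one]
    rw [hP₁, hQ₁] at huv
    linear_combination huv
  have hcopG : IsCoprime P₁ ((X : ℚ[X]) ^ e - 1) := by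
    rw [← EuclideanDomain.gcd_isUnit_iff]
    apply squarefree_xc c hc (EuclideanDomain.gcd P₁ ((X : ℚ[X]) ^ e - 1))
    rw [hP₁]
    calc EuclideanDomain.gcd P₁ ((X : ℚ[X]) ^ e - 1) * EuclideanDomain.gcd P₁ ((X : ℚ[X]) ^ e - 1)
        ∣ P₁ * ((X : ℚ[X]) ^ e - 1) :=
          mul_dvd_mul (EuclideanDomain.gcd_dvd_left _ _) (EuclideanDomain.gcd_dvd_right _ _)
      _ = ((X : ℚ[X]) ^ e - 1) * P₁ := mul_comm _ _
  have hfinal : IsCoprime (P₁ ^ m) ((((X : ℚ[X]) ^ e - 1) ^ (ℓ - m)) * Q₁ ^ ℓ) :=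
    ((hcopG.pow_right).mul_right (hcop.pow_right)).pow_left
  obtain ⟨α, β, hab⟩ := hfinal
  refine ⟨α, β, ?_⟩
  rw [hP₁, hQ₁, mul_pow, mul_pow]
  have hpow : ((X : ℚ[X]) ^ e - 1) ^ (ℓ - m) * ((X : ℚ[X]) ^ e - 1) ^ m
      = ((X : ℚ[X]) ^ e - 1) ^ ℓ := by
    rw [← pow_add]
    congr 1
    omega
  linear_combination (-(((X : ℚ[X]) ^ e - 1) ^ m)) * hab + β * Q₁ ^ ℓ * hpow

lemma poly_key (m ℓ c d : ℕ) (hc : 1 ≤ c) (hd : 1 ≤ d) :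
    ∃ α β : ℚ[X],
      ((X : ℚ[X]) ^ (Nat.gcd c d) - 1) ^ (min m ℓ)
        = α * (X ^ c - 1) ^ m + β * (X ^ d - 1) ^ ℓ := by
  rcases le_total m ℓ with h | h
  · rw [min_eq_left h]
    exact poly_key_aux m ℓ c d hc h
  · rw [min_eq_right h]
    obtain ⟨α, β, hab⟩ := poly_key_aux ℓ m d c hd h
    rw [Nat.gcd_comm d c] at hab
    exact ⟨β, α, by linear_combination hab⟩

end Stmt17Aux




/-- `T` is a strict `(m,q)`-isometry. -/
def IsStrictMQIsometry {E : Type*} [MetricSpace E] (T : E → E) (m : ℕ) (q : ℝ) : Prop :=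
  IsMQIsometry T m q ∧ (m = 1 ∨ ¬ IsMQIsometry T (m - 1) q)

set_option synthInstance.maxHeartbeats 1000000 in
theorem stmt_17 {E : Type*} [MetricSpace E] (T : E → E) (q : ℝ) (hq : 0 < q)
    (m ℓ : ℕ) (hm : 1 ≤ m) (hℓ : 1 ≤ ℓ) (c d : ℕ) (hc : 1 ≤ c) (hd : 1 ≤ d)
    (hTc : IsStrictMQIsometry (T^[c]) m q)
    (hTd : IsStrictMQIsometry (T^[d]) ℓ q) :
    IsMQIsometry (T^[Nat.gcd c d]) (min m ℓ) q := by
  open Stmt17Aux in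
  obtain ⟨hTc1, -⟩ := hTc
  obtain ⟨hTd1, -⟩ := hTd
  intro x y
  set f : ℕ → ℝ := fun n => dist (T^[n] x) (T^[n] y) ^ q with hf
  have key : ∀ (a mm : ℕ), IsMQIsometry (T^[a]) mm q → ((Sh ^ a - 1) ^ mm) f = 0 := by
    intro a mm hI
    funext j
    rw [Stmt17Aux.expand, Pi.zero_apply]
    refine Eq.trans (Finset.sum_congr rfl fun k hk => ?_) (hI (T^[j] x) (T^[j] y))
    have h1 : ∀ z : E, T^[j + k * a] z = (T^[a])^[k] (T^[j] z) := by
      intro z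
      rw [← Function.iterate_mul, ← Function.iterate_add_apply]
      congr 1
      ring
    simp only [hf, h1]
  have h1 := key c m hTc1
  have h2 := key d ℓ hTd1
  obtain ⟨α, β, hpoly⟩ := Stmt17Aux.poly_key m ℓ c d hc hd
  have hop : ((Sh ^ (Nat.gcd c d) - 1) ^ (min m ℓ)) f = 0 := by
    have h3 := congrArg (fun p : Polynomial ℚ => Polynomial.aeval Sh p f) hpoly
    simp only [map_add, map_mul, map_pow, map_sub, map_one, Polynomial.aeval_X] at h3
    rw [h3, LinearMap.add_apply, Module.End.mul_apply, Module.End.mul_apply, h1, h2,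
      map_zero, map_zero, add_zero]
  have h4 := congrFun hop 0
  rw [Stmt17Aux.expand, Pi.zero_apply] at h4
  refine Eq.trans (Finset.sum_congr rfl fun k hk => ?_) h4
  have h5 : ∀ z : E, (T^[Nat.gcd c d])^[k] z = T^[0 + k * Nat.gcd c d] z := by
    intro z
    rw [← Function.iterate_mul]
    congr 1
    ring
  simp only [hf, h5]
end

section
/- Let (E,d) be a metric space, q > 0 a real number, n, m ≥ 1 integers, and S, T : E → E maps with S ∘ T = T ∘ S. If T is an (n,q)-isometry and S is an (m,q)-isometry, then S ∘ T is an (m+n−1, q)-isometry. -/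
open Finset

namespace MQAux

/-- difference in the first variable -/
def D1 (g : ℕ → ℕ → ℝ) : ℕ → ℕ → ℝ := fun a b => g (a + 1) b - g a b
/-- difference in the second variable -/
def D2 (g : ℕ → ℕ → ℝ) : ℕ → ℕ → ℝ := fun a b => g a (b + 1) - g a b
/-- diagonal difference -/
def Dd (g : ℕ → ℕ → ℝ) : ℕ → ℕ → ℝ := fun a b => g (a + 1) (b + 1) - g a b

lemma D1_D2 (g : ℕ → ℕ → ℝ) : D1 (D2 g) = D2 (D1 g) := by
  funext a b; simp only [D1, D2]; ring

lemma D1_add (f g : ℕ → ℕ → ℝ) : D1 (f + g) = D1 f + D1 g := by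
  funext a b; simp only [D1, Pi.add_apply]; ring

lemma D2_add (f g : ℕ → ℕ → ℝ) : D2 (f + g) = D2 f + D2 g := by
  funext a b; simp only [D2, Pi.add_apply]; ring

lemma Dd_add (f g : ℕ → ℕ → ℝ) : Dd (f + g) = Dd f + Dd g := by
  funext a b; simp only [Dd, Pi.add_apply]; ring

lemma D1_zero : D1 0 = 0 := by funext a b; simp [D1]
lemma D2_zero : D2 0 = 0 := by funext a b; simp [D2]
lemma Dd_zero : Dd 0 = 0 := by funext a b; simp [Dd]

lemma Dd_iter_zero (k : ℕ) : Dd^[k] 0 = 0 := by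
  induction k with
  | zero => rfl
  | succ k ih => rw [Function.iterate_succ_apply, Dd_zero, ih]

lemma D1_iter_add (f g : ℕ → ℕ → ℝ) (k : ℕ) :
    D1^[k] (f + g) = D1^[k] f + D1^[k] g := by
  induction k generalizing f g with
  | zero => rfl
  | succ k ih => rw [Function.iterate_succ_apply, Function.iterate_succ_apply,
      Function.iterate_succ_apply, D1_add, ih]

lemma D2_iter_add (f g : ℕ → ℕ → ℝ) (k : ℕ) :
    D2^[k] (f + g) = D2^[k] f + D2^[k] g := by
  induction k generalizing f g with
  | zero => rfl
  | succ k ih => rw [Function.iterate_succ_apply, Function.iterate_succ_apply,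
      Function.iterate_succ_apply, D2_add, ih]

lemma Dd_iter_add (f g : ℕ → ℕ → ℝ) (k : ℕ) :
    Dd^[k] (f + g) = Dd^[k] f + Dd^[k] g := by
  induction k generalizing f g with
  | zero => rfl
  | succ k ih => rw [Function.iterate_succ_apply, Function.iterate_succ_apply,
      Function.iterate_succ_apply, Dd_add, ih]

lemma D1_iter_D2 (g : ℕ → ℕ → ℝ) (k : ℕ) : D1^[k] (D2 g) = D2 (D1^[k] g) := by
  induction k generalizing g with
  | zero => rfl
  | succ k ih => rw [Function.iterate_succ_apply, Function.iterate_succ_apply,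
      D1_D2, ih]

lemma D2_iter_D1 (g : ℕ → ℕ → ℝ) (k : ℕ) : D2^[k] (D1 g) = D1 (D2^[k] g) := by
  induction k generalizing g with
  | zero => rfl
  | succ k ih => rw [Function.iterate_succ_apply, Function.iterate_succ_apply,
      ← D1_D2, ih]

lemma D1_iter_comm (g : ℕ → ℕ → ℝ) (k : ℕ) : D1^[k] (D1 g) = D1 (D1^[k] g) := by
  rw [← Function.iterate_succ_apply, Function.iterate_succ_apply']

lemma D2_iter_comm (g : ℕ → ℕ → ℝ) (k : ℕ) : D2^[k] (D2 g) = D2 (D2^[k] g) := by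
  rw [← Function.iterate_succ_apply, Function.iterate_succ_apply']

lemma Dd_decomp (g : ℕ → ℕ → ℝ) : Dd g = D1 g + (D2 g + D2 (D1 g)) := by
  funext a b; simp only [Dd, D1, D2, Pi.add_apply]; ring

/-- Key combinatorial lemma: if the `m`-th difference in the first variable and the
`n`-th difference in the second variable vanish, then the `(m+n-1)`-th diagonal
difference vanishes. -/
lemma key : ∀ N m n : ℕ, 1 ≤ m → 1 ≤ n → m + n = N →
    ∀ g : ℕ → ℕ → ℝ, D1^[m] g = 0 → D2^[n] g = 0 → Dd^[m + n - 1] g = 0 := by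
  intro N
  induction N using Nat.strong_induction_on with
  | _ N IH =>
    intro m n hm hn hN g h1 h2
    have hmn : m + n - 1 = (m + n - 2) + 1 := by omega
    rw [hmn, Function.iterate_succ_apply, Dd_decomp, Dd_iter_add]
    have hA : Dd^[m + n - 2] (D1 g) = 0 := by
      rcases Nat.lt_or_ge m 2 with hm2 | hm2
      · have hm1 : m = 1 := by omega
        subst hm1
        simp only [Function.iterate_one] at h1
        rw [h1, Dd_iter_zero]
      · have e1 : D1^[m - 1] (D1 g) = 0 := by
          have h1' := h1
          rw [show m = (m - 1) + 1 by omega, Function.iterate_succ_apply] at h1'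
          exact h1'
        have e2 : D2^[n] (D1 g) = 0 := by
          rw [D2_iter_D1, h2, D1_zero]
        have := IH (m - 1 + n) (by omega) (m - 1) n (by omega) hn rfl (D1 g) e1 e2
        have harith : m - 1 + n - 1 = m + n - 2 := by omega
        rwa [harith] at this
    have hB : Dd^[m + n - 2] (D2 g + D2 (D1 g)) = 0 := by
      rcases Nat.lt_or_ge n 2 with hn2 | hn2
      · have hn1 : n = 1 := by omega
        subst hn1
        simp only [Function.iterate_one] at h2
        rw [← D1_D2, h2, D1_zero, add_zero, Dd_iter_zero]
      · -- n ≥ 2 : apply IH to u = D2 g + D2 (D1 g) at (m, n-1)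
        have e1 : D1^[m] (D2 g + D2 (D1 g)) = 0 := by
          rw [D1_iter_add, D1_iter_D2, D1_iter_D2 (D1 g), D1_iter_comm, h1, D1_zero, D2_zero, add_zero]
        have h2' : D2^[n - 1] (D2 g) = 0 := by
          have h2' := h2
          rw [show n = (n - 1) + 1 by omega, Function.iterate_succ_apply] at h2'
          exact h2'
        have e2 : D2^[n - 1] (D2 g + D2 (D1 g)) = 0 := by
          rw [D2_iter_add, h2', ← D1_D2, D2_iter_D1, h2', D1_zero, add_zero]
        have := IH (m + (n - 1)) (by omega) m (n - 1) hm (by omega) rfl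
          (D2 g + D2 (D1 g)) e1 e2
        have harith : m + (n - 1) - 1 = m + n - 2 := by omega
        rwa [harith] at this
    rw [hA, hB, add_zero]

lemma D1_iter_eval (g : ℕ → ℕ → ℝ) (m : ℕ) (a b : ℕ) :
    D1^[m] g a b = (fwdDiff 1)^[m] (fun a' => g a' b) a := by
  induction m generalizing g with
  | zero => rfl
  | succ m ih =>
    rw [Function.iterate_succ_apply, Function.iterate_succ_apply, ih]
    congr 1

lemma D2_iter_eval (g : ℕ → ℕ → ℝ) (n : ℕ) (a b : ℕ) :
    D2^[n] g a b = (fwdDiff 1)^[n] (fun b' => g a b') b := by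
  induction n generalizing g with
  | zero => rfl
  | succ n ih =>
    rw [Function.iterate_succ_apply, Function.iterate_succ_apply, ih]
    congr 1

lemma Dd_iter_diag (g : ℕ → ℕ → ℝ) (N : ℕ) (a : ℕ) :
    Dd^[N] g a a = (fwdDiff 1)^[N] (fun k => g k k) a := by
  induction N generalizing g with
  | zero => rfl
  | succ N ih =>
    rw [Function.iterate_succ_apply, Function.iterate_succ_apply, ih]
    congr 1

lemma sum_eq_fwd (f : ℕ → ℝ) (N : ℕ) :
    ∑ k ∈ Finset.range (N + 1), (-1 : ℝ) ^ (N - k) * (N.choose k : ℝ) * f k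
      = (fwdDiff 1)^[N] f 0 := by
  rw [fwdDiff_iter_eq_sum_shift]
  refine Finset.sum_congr rfl fun k _ => ?_
  have h0 : (0 : ℕ) + k • 1 = k := by simp
  rw [h0, zsmul_eq_mul]
  push_cast
  ring

end MQAux

/-- An `(m,q)`-isometry has vanishing `m`-th forward differences of
`k ↦ dist (U^[k] u) (U^[k] v) ^ q`, at every point. -/
lemma fwdDiff_of_isMQIsometry {E : Type*} [MetricSpace E] {U : E → E} {m : ℕ} {q : ℝ}
    (hU : IsMQIsometry U m q) (u v : E) :
    (fwdDiff 1)^[m] (fun k => dist (U^[k] u) (U^[k] v) ^ q) = 0 := by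
  funext a
  rw [fwdDiff_iter_eq_sum_shift]
  have key := hU (U^[a] u) (U^[a] v)
  rw [Pi.zero_apply, ← key]
  refine Finset.sum_congr rfl fun k _ => ?_
  have h1 : a + k • 1 = k + a := by simp [smul_eq_mul]; omega
  rw [h1, zsmul_eq_mul, Function.iterate_add_apply, Function.iterate_add_apply]
  push_cast
  ring

theorem stmt_18 {E : Type*} [MetricSpace E] (S T : E → E) (q : ℝ) (hq : 0 < q)
    (n m : ℕ) (hn : 1 ≤ n) (hm : 1 ≤ m)
    (hcomm : S ∘ T = T ∘ S)
    (hT : IsMQIsometry T n q) (hS : IsMQIsometry S m q) :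
    IsMQIsometry (S ∘ T) (m + n - 1) q := by
  intro x y
  have hc : Function.Commute S T := fun a => congrFun hcomm a
  set g : ℕ → ℕ → ℝ := fun a b => dist (S^[a] (T^[b] x)) (S^[a] (T^[b] y)) ^ q with hg
  have H1 : MQAux.D1^[m] g = 0 := by
    funext a b
    rw [MQAux.D1_iter_eval, Pi.zero_apply, Pi.zero_apply]
    have := fwdDiff_of_isMQIsometry hS (T^[b] x) (T^[b] y)
    exact congrFun this a
  have H2 : MQAux.D2^[n] g = 0 := by
    funext a b
    rw [MQAux.D2_iter_eval, Pi.zero_apply, Pi.zero_apply]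
    have heq : (fun b' => g a b') = fun k => dist (T^[k] (S^[a] x)) (T^[k] (S^[a] y)) ^ q := by
      funext b'
      rw [hg]
      simp only
      rw [(hc.iterate_iterate a b') x, (hc.iterate_iterate a b') y]
    rw [heq]
    exact congrFun (fwdDiff_of_isMQIsometry hT (S^[a] x) (S^[a] y)) b
  have Hkey : MQAux.Dd^[m + n - 1] g = 0 :=
    MQAux.key (m + n) m n hm hn rfl g H1 H2
  have hdiag : (fun k => dist ((S ∘ T)^[k] x) ((S ∘ T)^[k] y) ^ q) = fun k => g k k := by
    funext k
    rw [hc.comp_iterate k]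
    rfl
  calc ∑ k ∈ Finset.range (m + n - 1 + 1),
        (-1 : ℝ) ^ (m + n - 1 - k) * ((m + n - 1).choose k : ℝ)
          * dist ((S ∘ T)^[k] x) ((S ∘ T)^[k] y) ^ q
      = ∑ k ∈ Finset.range (m + n - 1 + 1),
        (-1 : ℝ) ^ (m + n - 1 - k) * ((m + n - 1).choose k : ℝ) * g k k := by
        refine Finset.sum_congr rfl fun k _ => ?_
        rw [congrFun hdiag k]
    _ = (fwdDiff 1)^[m + n - 1] (fun k => g k k) 0 := MQAux.sum_eq_fwd _ _
    _ = MQAux.Dd^[m + n - 1] g 0 0 := (MQAux.Dd_iter_diag g _ 0).symm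
    _ = 0 := by rw [Hkey]; rfl
end

section
/- Let H be a complex Hilbert space, m ≥ 1 and n ≥ 1 integers, T a bounded linear operator on H which is a strict m-isometry, and Q a bounded linear operator on H with Q^n = 0, Q^{n-1} ≠ 0, and T Q = Q T. Then T + Q is a (2n + m − 2)-isometry. -/
open ContinuousLinearMap
set_option maxHeartbeats 1600000

/-- `T` is an `m`-isometry on the complex Hilbert space `H`. -/
def IsMIsometry {H : Type*} [NormedAddCommGroup H] [InnerProductSpace ℂ H] [CompleteSpace H]
    (T : H →L[ℂ] H) (m : ℕ) : Prop :=
  ∑ k ∈ Finset.range (m + 1),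
    ((-1 : ℤ) ^ (m - k) * (m.choose k)) • ((adjoint T) ^ k * T ^ k) = 0

/-- `T` is a strict `m`-isometry. -/
def IsStrictMIsometry {H : Type*} [NormedAddCommGroup H] [InnerProductSpace ℂ H]
    [CompleteSpace H] (T : H →L[ℂ] H) (m : ℕ) : Prop :=
  IsMIsometry T m ∧ (m = 1 ∨ ¬ IsMIsometry T (m - 1))

lemma sub_one_pow_eq {R : Type*} [Ring R] (x : R) (k : ℕ) :
    (x - 1) ^ k
      = ∑ j ∈ Finset.range (k + 1), ((-1 : ℤ) ^ (k - j) * (k.choose j)) • x ^ j := by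
  rw [sub_eq_add_neg, (Commute.neg_one_right x).add_pow k]
  refine Finset.sum_congr rfl fun j _ => ?_
  have h1 : Commute ((-1 : R) ^ (k - j)) (x ^ j) := ((Commute.neg_one_left x).pow_pow _ _)
  have h2 : Commute ((k.choose j : R)) (x ^ j) := (Nat.cast_commute _ _)
  rw [zsmul_eq_mul, Int.cast_mul, Int.cast_pow, Int.cast_neg, Int.cast_one, Int.cast_natCast,
    mul_assoc, ← (h1.mul_left h2).symm.eq]

section Aux
variable {H : Type*} [NormedAddCommGroup H] [InnerProductSpace ℂ H] [CompleteSpace H]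

noncomputable def EOp (S : H →L[ℂ] H) : Module.End ℂ (H →L[ℂ] H) :=
  LinearMap.mulLeft ℂ (adjoint S) * LinearMap.mulRight ℂ S

lemma EOp_pow_apply (S : H →L[ℂ] H) (k : ℕ) :
    ((EOp S) ^ k) 1 = (adjoint S) ^ k * S ^ k := by
  rw [EOp, (LinearMap.commute_mulLeft_right _ _).mul_pow, LinearMap.pow_mulLeft,
    LinearMap.pow_mulRight, Module.End.mul_apply, LinearMap.mulRight_apply,
    LinearMap.mulLeft_apply, one_mul]

lemma expand (S : H →L[ℂ] H) (k : ℕ) :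
    ((EOp S - 1) ^ k) 1
      = ∑ j ∈ Finset.range (k + 1),
          ((-1 : ℤ) ^ (k - j) * (k.choose j)) • ((adjoint S) ^ j * S ^ j) := by
  rw [sub_one_pow_eq, LinearMap.sum_apply]
  refine Finset.sum_congr rfl fun j _ => ?_
  rw [LinearMap.smul_apply, EOp_pow_apply]

lemma mulLeft_add' (X Y : H →L[ℂ] H) :
    LinearMap.mulLeft ℂ (X + Y) = LinearMap.mulLeft ℂ X + LinearMap.mulLeft ℂ Y := by
  ext z; simp [add_mul]

lemma mulRight_add' (X Y : H →L[ℂ] H) :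
    LinearMap.mulRight ℂ (X + Y) = LinearMap.mulRight ℂ X + LinearMap.mulRight ℂ Y := by
  ext z; simp [mul_add]

end Aux

theorem stmt_19 {H : Type*} [NormedAddCommGroup H] [InnerProductSpace ℂ H] [CompleteSpace H]
    (m n : ℕ) (hm : 1 ≤ m) (hn : 1 ≤ n)
    (T Q : H →L[ℂ] H)
    (hT : IsStrictMIsometry T m)
    (hQn : Q ^ n = 0) (hQn1 : Q ^ (n - 1) ≠ 0)
    (hcomm : T * Q = Q * T) :
    IsMIsometry (T + Q) (2 * n + m - 2) := by
  obtain ⟨hTm, -⟩ := hT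
  set a := LinearMap.mulLeft ℂ (adjoint T) with ha
  set b := LinearMap.mulLeft ℂ (adjoint Q) with hb
  set c := LinearMap.mulRight ℂ T with hc
  set d := LinearMap.mulRight ℂ Q with hd
  have hstar : adjoint T * adjoint Q = adjoint Q * adjoint T := by
    rw [← star_eq_adjoint, ← star_eq_adjoint, ← star_mul, ← star_mul, hcomm]
  have hab : Commute a b := by
    show a * b = b * a
    rw [ha, hb, Module.End.mul_eq_comp, Module.End.mul_eq_comp, ← LinearMap.mulLeft_mul,
      ← LinearMap.mulLeft_mul, hstar]
  have hcd : Commute c d := by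
    show c * d = d * c
    rw [hc, hd, Module.End.mul_eq_comp, Module.End.mul_eq_comp, ← LinearMap.mulRight_mul,
      ← LinearMap.mulRight_mul, hcomm]
  have hac : Commute a c := LinearMap.commute_mulLeft_right _ _
  have had : Commute a d := LinearMap.commute_mulLeft_right _ _
  have hbc : Commute b c := LinearMap.commute_mulLeft_right _ _
  have hbd : Commute b d := LinearMap.commute_mulLeft_right _ _
  have comm4 : ∀ p q r s : Module.End ℂ (H →L[ℂ] H), Commute p r → Commute p s →
      Commute q r → Commute q s → Commute (p * q) (r * s) :=
    fun _ _ _ _ h1 h2 h3 h4 => (h1.mul_right h2).mul_left (h3.mul_right h4)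
  set u := EOp T - 1 with hu
  set v := a * d with hv
  set w := b * c with hw
  set x := b * d with hx
  have hEt : EOp T = a * c := rfl
  -- commutation among u v w x
  have hacad : Commute (a*c) (a*d) := comm4 _ _ _ _ (Commute.refl a) had hac.symm hcd
  have hacbc : Commute (a*c) (b*c) := comm4 _ _ _ _ hab hac.symm hbc.symm (Commute.refl c)
  have hacbd : Commute (a*c) (b*d) := comm4 _ _ _ _ hab had hbc.symm hcd
  have hadbc : Commute (a*d) (b*c) := comm4 _ _ _ _ hab hac hbd.symm hcd.symm
  have hadbd : Commute (a*d) (b*d) := comm4 _ _ _ _ hab had hbd.symm (Commute.refl d)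
  have hbcbd : Commute (b*c) (b*d) := comm4 _ _ _ _ (Commute.refl b) hbd hbc.symm hcd
  have huv : Commute u v := by rw [hu, hv, hEt]; exact hacad.sub_left (Commute.one_left _)
  have huw : Commute u w := by rw [hu, hw, hEt]; exact hacbc.sub_left (Commute.one_left _)
  have hux : Commute u x := by rw [hu, hx, hEt]; exact hacbd.sub_left (Commute.one_left _)
  have hvw : Commute v w := hadbc
  have hvx : Commute v x := hadbd
  have hwx : Commute w x := hbcbd
  -- nilpotency facts
  have hQpow : ∀ {k : ℕ}, n ≤ k → Q ^ k = 0 := fun hk => pow_eq_zero_of_le hk hQn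
  have hd0 : ∀ {k : ℕ}, n ≤ k → d ^ k = 0 := by
    intro k hk
    rw [hd, LinearMap.pow_mulRight, hQpow hk, LinearMap.mulRight_zero_eq_zero]
  have hb0 : ∀ {k : ℕ}, n ≤ k → b ^ k = 0 := by
    intro k hk
    rw [hb, LinearMap.pow_mulLeft, ← star_eq_adjoint, ← star_pow, hQpow hk, star_zero,
      LinearMap.mulLeft_zero_eq_zero]
  -- the key vanishing lemma
  have key : ∀ i p j q : ℕ, i + p + j + q = 2 * n + m - 2 →
      ((u ^ i * v ^ p) * (w ^ j * x ^ q)) 1 = 0 := by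
    intro i p j q hsum
    by_cases hi : m ≤ i
    · -- move u^i to the right and use the m-isometry property
      have hui : (u ^ i) (1 : H →L[ℂ] H) = 0 := by
        have hrw : u ^ i = u ^ (i - m) * u ^ m := by
          rw [← pow_add]; congr 1; omega
        have hm0 : (u ^ m) (1 : H →L[ℂ] H) = 0 := by
          rw [hu, expand]; exact hTm
        rw [hrw, Module.End.mul_apply, hm0, map_zero]
      have hcom : Commute (u ^ i) (v ^ p * (w ^ j * x ^ q)) :=
        (huv.pow_pow _ _).mul_right ((huw.pow_pow _ _).mul_right (hux.pow_pow _ _))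
      rw [mul_assoc, hcom.eq, Module.End.mul_apply, hui, map_zero]
    · by_cases hpq : n ≤ p + q
      · -- v^p * x^q = 0
        have hvx0 : v ^ p * x ^ q = 0 := by
          rw [hv, hx, had.mul_pow, hbd.mul_pow, mul_assoc, ← mul_assoc (d ^ p),
            (hbd.symm.pow_pow _ _).eq, mul_assoc (b ^ q), ← pow_add, hd0 hpq,
            mul_zero, mul_zero]
        have hre : (u ^ i * v ^ p) * (w ^ j * x ^ q)
            = (u ^ i * w ^ j) * (v ^ p * x ^ q) := by
          rw [mul_assoc, mul_assoc, ← mul_assoc (v ^ p), (hvw.pow_pow _ _).eq,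
            mul_assoc (w ^ j)]
        rw [hre, hvx0, mul_zero, LinearMap.zero_apply]
      · have hjq : n ≤ j + q := by omega
        have hwx0 : w ^ j * x ^ q = 0 := by
          rw [hw, hx, hbc.mul_pow, hbd.mul_pow, mul_assoc, ← mul_assoc (c ^ j),
            (hbc.symm.pow_pow _ _).eq, ← mul_assoc (b ^ j), ← mul_assoc (b ^ j),
            ← pow_add, hb0 hjq, zero_mul, zero_mul]
        rw [hwx0, mul_zero, LinearMap.zero_apply]
  -- now the main computation
  rw [IsMIsometry, ← expand]
  have hsplit : EOp (T + Q) - 1 = (u + v) + (w + x) := by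
    have h1 : EOp (T + Q) = (a + b) * (c + d) := by
      rw [EOp, map_add, mulLeft_add', mulRight_add', ha, hb, hc, hd]
    rw [h1, hu, hv, hw, hx, hEt]
    noncomm_ring
  have hPQ : Commute (u + v) (w + x) :=
    (huw.add_left hvw).add_right (hux.add_left hvx)
  rw [hsplit, hPQ.add_pow', LinearMap.sum_apply]
  refine Finset.sum_eq_zero fun s hs => ?_
  have hs' : s.1 + s.2 = 2 * n + m - 2 := Finset.HasAntidiagonal.mem_antidiagonal.mp hs
  rw [LinearMap.smul_apply, (huv).add_pow', (hwx).add_pow', Finset.sum_mul_sum,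
    LinearMap.sum_apply]
  rw [Finset.sum_eq_zero, smul_zero]
  intro ip hip
  rw [LinearMap.sum_apply]
  rw [Finset.sum_eq_zero]
  intro jq hjq
  have h1 : ip.1 + ip.2 = s.1 := Finset.HasAntidiagonal.mem_antidiagonal.mp hip
  have h2 : jq.1 + jq.2 = s.2 := Finset.HasAntidiagonal.mem_antidiagonal.mp hjq
  rw [smul_mul_assoc, mul_smul_comm, LinearMap.smul_apply, LinearMap.smul_apply,
    key _ _ _ _ (by omega), smul_zero, smul_zero]
end
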